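/- Let n ≥ 1, M ∈ ℕ, let s ∈ W_n be a monomial of length |s|, and let m, m' ∈ ℕ^n with all entries of m and m' at most M. Then ⟨e_m, π(s s*) e_{m'}⟩ = 0 whenever m ≠ m', and |⟨e_m, π(s s*) e_m⟩| ≤ (|s|+M)! / M!. -/

import Mathlib

open scoped ComplexOrder

noncomputable section

/-- The Weyl algebra `W_n`: a complex `*`-algebra generated by `a 1, …, a n` and their
adjoints, satisfying the canonical commutation relations, in which the normally ordered
monomials `(a*)^s a^t` form a basis (this pins the algebra down up to `*`-isomorphism). -/
structure WeylAlgebra (n : ℕ) where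
  carrier : Type
  [ring : Ring carrier]
  [alg : Algebra ℂ carrier]
  [starRing : StarRing carrier]
  [starModule : StarModule ℂ carrier]
  a : Fin n → carrier
  comm_aa : ∀ i j, a i * a j = a j * a i
  comm_ss : ∀ i j, star (a i) * star (a j) = star (a j) * star (a i)
  ccr : ∀ i j : Fin n, a i * star (a j) - star (a j) * a i = if i = j then 1 else 0
  basis : Module.Basis ((Fin n → ℕ) × (Fin n → ℕ)) ℂ carrier
  basis_eq : ∀ st : (Fin n → ℕ) × (Fin n → ℕ),
    basis st = (List.ofFn fun i => star (a i) ^ st.1 i).prod *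
               (List.ofFn fun i => (a i) ^ st.2 i).prod

attribute [instance] WeylAlgebra.ring WeylAlgebra.alg WeylAlgebra.starRing
  WeylAlgebra.starModule

namespace WeylAlgebra

variable {n : ℕ} (W : WeylAlgebra n)

/-- The monomial `a^t = ∏ i, (a i)^(t i)`. -/
def amon (t : Fin n → ℕ) : W.carrier := (List.ofFn fun i => W.a i ^ t i).prod

/-- The normally ordered monomial `(a*)^s a^t`. -/
def nmon (s t : Fin n → ℕ) : W.carrier :=
  (List.ofFn fun i => star (W.a i) ^ s i).prod * (List.ofFn fun i => W.a i ^ t i).prod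

/-- The `l₁`-norm of the coefficients of the (unique) normal form of `p`. -/
def l1 (p : W.carrier) : ℝ := (W.basis.repr p).sum fun _ c => ‖c‖

/-- The degree of `p`: the maximal `‖s‖₁ + ‖t‖₁` over monomials appearing in the normal
form of `p`. -/
def deg (p : W.carrier) : ℕ :=
  (W.basis.repr p).support.sup fun st => (∑ i, st.1 i) + (∑ i, st.2 i)

/-- `p` is a sum of squares, i.e. `p ∈ Σ²`. -/
def IsSOS (p : W.carrier) : Prop :=
  ∃ (N : ℕ) (f : Fin N → W.carrier), p = ∑ i, star (f i) * f i

/-- `p ∈ Σ²_k`: `p` is a sum of squares of elements of degree at most `k`. -/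
def IsSOSdeg (k : ℕ) (p : W.carrier) : Prop :=
  ∃ (N : ℕ) (f : Fin N → W.carrier), (∀ i, W.deg (f i) ≤ k) ∧ p = ∑ i, star (f i) * f i

/-- The element `g^r_c = ∑_{‖t‖₁ ≤ r} (n-1)!/(c^{‖t‖₁} (n+‖t‖₁-1)!) • a^t (a^t)*`. -/
def gpoly (c : ℝ) (r : ℕ) : W.carrier :=
  ∑ t ∈ (Fintype.piFinset fun _ : Fin n => Finset.range (r + 1)).filter
      (fun t => ∑ i, t i ≤ r),
    ((Nat.factorial (n - 1) : ℂ) /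
        ((c : ℂ) ^ (∑ i, t i) * (Nat.factorial (n + (∑ i, t i) - 1) : ℂ))) •
      (W.amon t * star (W.amon t))

/-- The value in `W` of a single letter (`Sum.inl i ↦ a i`, `Sum.inr i ↦ (a i)*`). -/
def letterVal : Fin n ⊕ Fin n → W.carrier
  | Sum.inl i => W.a i
  | Sum.inr i => star (W.a i)

/-- The value in `W` of a word (monomial) in the letters `a_1,…,a_n,a_1*,…,a_n*`. -/
def wordVal (w : List (Fin n ⊕ Fin n)) : W.carrier := (w.map W.letterVal).prod

end WeylAlgebra

/-- The domain of the Schrödinger representation: finitely supported functions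
`ℕ^n → ℂ`. -/
abbrev DSpace (n : ℕ) := (Fin n → ℕ) →₀ ℂ

/-- The number basis vector `e_m`. -/
def eVec {n : ℕ} (m : Fin n → ℕ) : DSpace n := Finsupp.single m 1

/-- The inner product `⟨f, g⟩ = ∑_m conj (f m) * g m` on `DSpace n`
(antilinear in the first argument). -/
def innerD {n : ℕ} (f g : DSpace n) : ℂ := f.sum fun m c => (starRingEnd ℂ) c * g m

/-- The Schrödinger (Fock) representation of the Weyl algebra `W` on `DSpace n`,
specified by its action on the number basis. -/
structure Schrodinger {n : ℕ} (W : WeylAlgebra n) where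
  rep : W.carrier →ₐ[ℂ] Module.End ℂ (DSpace n)
  rep_a : ∀ (i : Fin n) (m : Fin n → ℕ),
    rep (W.a i) (eVec m) =
      (Real.sqrt (m i) : ℂ) • eVec (Function.update m i (m i - 1))
  rep_astar : ∀ (i : Fin n) (m : Fin n → ℕ),
    rep (star (W.a i)) (eVec m) =
      (Real.sqrt (m i + 1) : ℂ) • eVec (Function.update m i (m i + 1))

namespace Schrodinger

variable {n : ℕ} {W : WeylAlgebra n} (S : Schrodinger W)

/-- `π(p) ≥ 0`: the quadratic form of `π(p)` is nonnegative on the domain. -/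
def PiNonneg (p : W.carrier) : Prop := ∀ φ : DSpace n, 0 ≤ innerD φ (S.rep p φ)

/-- The set of energies `⟨φ, π(p) φ⟩` over normalized `φ` in the domain. -/
def energySet (p : W.carrier) : Set ℝ :=
  { x | ∃ φ : DSpace n, innerD φ φ = 1 ∧ (innerD φ (S.rep p φ)).re = x }

/-- `λ_inf(p)`, the infimum of `⟨φ, π(p) φ⟩` over normalized `φ`. -/
def lambdaInf (p : W.carrier) : ℝ := sInf (S.energySet p)

end Schrodinger

lemma schrodinger_key {n : ℕ} {W : WeylAlgebra n} (S : Schrodinger W)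
    (w : List (Fin n ⊕ Fin n)) (M : ℕ) (m : Fin n → ℕ) (hm : ∀ i, m i ≤ M) :
    ∃ c : ℝ, 0 ≤ c ∧ c ≤ (Nat.factorial (w.length + M) : ℝ) / (Nat.factorial M : ℝ) ∧
      S.rep (W.wordVal w * star (W.wordVal w)) (eVec m) = (c : ℂ) • eVec m := by
  have happ : ∀ (p q : W.carrier) (v : DSpace n), S.rep (p * q) v = S.rep p (S.rep q v) := by
    intro p q v; rw [map_mul]; rfl
  induction w generalizing M m with
  | nil =>
    refine ⟨1, zero_le_one, ?_, ?_⟩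
    · rw [List.length_nil, zero_add, div_self (by positivity : (Nat.factorial M : ℝ) ≠ 0)]
    · simp [WeylAlgebra.wordVal]
  | cons l w ih =>
    have hsplit : S.rep (W.wordVal (l :: w) * star (W.wordVal (l :: w))) (eVec m)
        = S.rep (W.letterVal l)
            (S.rep (W.wordVal w * star (W.wordVal w))
              (S.rep (star (W.letterVal l)) (eVec m))) := by
      have h1 : W.wordVal (l :: w) = W.letterVal l * W.wordVal w := by
        simp [WeylAlgebra.wordVal]
      rw [h1, star_mul, mul_assoc, ← mul_assoc (W.wordVal w), happ, happ]
    have hfact : ((M : ℝ) + 1) *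
        ((Nat.factorial (w.length + (M + 1)) : ℝ) / (Nat.factorial (M + 1) : ℝ))
        = (Nat.factorial ((l :: w).length + M) : ℝ) / (Nat.factorial M : ℝ) := by
      have h1 : (l :: w).length + M = w.length + (M + 1) := by simp; omega
      rw [h1, Nat.factorial_succ]
      have hM : (Nat.factorial M : ℝ) ≠ 0 := by positivity
      push_cast
      field_simp
    cases l with
    | inl i =>
      set m1 : Fin n → ℕ := Function.update m i (m i + 1) with hm1def
      have hm1 : ∀ j, m1 j ≤ M + 1 := by
        intro j
        rcases eq_or_ne j i with h | h
        · rw [h, hm1def, Function.update_self]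
          exact add_le_add_left (hm i) 1
        · rw [hm1def, Function.update_of_ne h]
          exact (hm j).trans (Nat.le_succ M)
      obtain ⟨c1, hc10, hc1b, heq⟩ := ih (M + 1) m1 hm1
      set r : ℝ := Real.sqrt ((m i : ℝ) + 1) with hrdef
      have hr : r * r = (m i : ℝ) + 1 := Real.mul_self_sqrt (by positivity)
      have h0 : S.rep (star (W.letterVal (Sum.inl i))) (eVec m) = (r : ℂ) • eVec m1 :=
        S.rep_astar i m
      have h2 : S.rep (W.letterVal (Sum.inl i)) (eVec m1) = (r : ℂ) • eVec m := by
        show S.rep (W.a i) (eVec m1) = (r : ℂ) • eVec m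
        have h3 := S.rep_a i m1
        have e1 : m1 i = m i + 1 := Function.update_self i (m i + 1) m
        have e2 : Function.update m1 i (m1 i - 1) = m := by
          rw [e1, Nat.add_sub_cancel, hm1def, Function.update_idem, Function.update_eq_self]
        have e3 : ((m1 i : ℝ)) = (m i : ℝ) + 1 := by rw [e1]; push_cast; ring
        rw [h3, e2, e3]
      refine ⟨((m i : ℝ) + 1) * c1, by positivity, ?_, ?_⟩
      · calc ((m i : ℝ) + 1) * c1 ≤ ((M : ℝ) + 1) * c1 := by
              apply mul_le_mul_of_nonneg_right _ hc10
              have hMi : (m i : ℝ) ≤ (M : ℝ) := by exact_mod_cast hm i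
              linarith
          _ ≤ ((M : ℝ) + 1) *
              ((Nat.factorial (w.length + (M + 1)) : ℝ) / (Nat.factorial (M + 1) : ℝ)) := by
              apply mul_le_mul_of_nonneg_left hc1b (by positivity)
          _ = _ := hfact
      · rw [hsplit, h0, map_smul, heq, map_smul, map_smul, h2, smul_smul, smul_smul]
        congr 1
        have : r * (c1 * r) = ((m i : ℝ) + 1) * c1 := by rw [← hr]; ring
        calc (r : ℂ) * (c1 : ℂ) * (r : ℂ) = ((r * (c1 * r) : ℝ) : ℂ) := by push_cast; ring
          _ = _ := by rw [this]
    | inr i =>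
      have hss : star (W.letterVal (Sum.inr i)) = W.a i := star_star (W.a i)
      by_cases hmi : m i = 0
      · refine ⟨0, le_refl 0, by positivity, ?_⟩
        rw [hsplit, hss, S.rep_a i m, hmi]
        simp
      · have hmi1 : 1 ≤ m i := Nat.one_le_iff_ne_zero.2 hmi
        set m1 : Fin n → ℕ := Function.update m i (m i - 1) with hm1def
        have hm1 : ∀ j, m1 j ≤ M + 1 := by
          intro j
          rcases eq_or_ne j i with h | h
          · rw [h, hm1def, Function.update_self]
            exact (Nat.sub_le _ _).trans ((hm i).trans (Nat.le_succ M))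
          · rw [hm1def, Function.update_of_ne h]
            exact (hm j).trans (Nat.le_succ M)
        obtain ⟨c1, hc10, hc1b, heq⟩ := ih (M + 1) m1 hm1
        set r : ℝ := Real.sqrt ((m i : ℝ)) with hrdef
        have hr : r * r = (m i : ℝ) := Real.mul_self_sqrt (by positivity)
        have h0 : S.rep (star (W.letterVal (Sum.inr i))) (eVec m) = (r : ℂ) • eVec m1 := by
          rw [hss]; exact S.rep_a i m
        have h2 : S.rep (W.letterVal (Sum.inr i)) (eVec m1) = (r : ℂ) • eVec m := by
          show S.rep (star (W.a i)) (eVec m1) = (r : ℂ) • eVec m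
          have h3 := S.rep_astar i m1
          have e1 : m1 i = m i - 1 := Function.update_self i (m i - 1) m
          have e1' : m1 i + 1 = m i := by rw [e1]; omega
          have e2 : Function.update m1 i (m1 i + 1) = m := by
            rw [e1', hm1def, Function.update_idem, Function.update_eq_self]
          have e3 : ((m1 i : ℝ)) + 1 = (m i : ℝ) := by
            rw [← e1']; push_cast; ring
          rw [h3, e2, e3]
        refine ⟨(m i : ℝ) * c1, by positivity, ?_, ?_⟩
        · calc (m i : ℝ) * c1 ≤ ((M : ℝ) + 1) * c1 := by
                apply mul_le_mul_of_nonneg_right _ hc10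
                have := hm i
                have : (m i : ℝ) ≤ (M : ℝ) := by exact_mod_cast this
                linarith
            _ ≤ ((M : ℝ) + 1) *
                ((Nat.factorial (w.length + (M + 1)) : ℝ) / (Nat.factorial (M + 1) : ℝ)) := by
                apply mul_le_mul_of_nonneg_left hc1b (by positivity)
            _ = _ := hfact
        · rw [hsplit, h0, map_smul, heq, map_smul, map_smul, h2, smul_smul, smul_smul]
          congr 1
          have : r * (c1 * r) = (m i : ℝ) * c1 := by rw [← hr]; ring
          calc (r : ℂ) * (c1 : ℂ) * (r : ℂ) = ((r * (c1 * r) : ℝ) : ℂ) := by push_cast; ring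
            _ = _ := by rw [this]

/-- For a monomial `s` (word `w`) and number states `e_m, e_{m'}`
with all entries at most `M`: `⟨e_m, π(s s*) e_{m'}⟩ = 0` when `m ≠ m'`, and
`|⟨e_m, π(s s*) e_m⟩| ≤ (|s|+M)!/M!`. -/
theorem matrix_element_bound {n : ℕ} (hn : 1 ≤ n) (W : WeylAlgebra n)
    (S : Schrodinger W) (M : ℕ) (w : List (Fin n ⊕ Fin n))
    (m m' : Fin n → ℕ) (hm : ∀ i, m i ≤ M) (hm' : ∀ i, m' i ≤ M) :
    (m ≠ m' →
      innerD (eVec m) (S.rep (W.wordVal w * star (W.wordVal w)) (eVec m')) = 0) ∧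
    ‖innerD (eVec m) (S.rep (W.wordVal w * star (W.wordVal w)) (eVec m))‖
      ≤ (Nat.factorial (w.length + M) : ℝ) / (Nat.factorial M : ℝ) := by
  obtain ⟨c, hc0, hcb, heq⟩ := schrodinger_key S w M m hm
  obtain ⟨c', hc'0, hc'b, heq'⟩ := schrodinger_key S w M m' hm'
  have hinner : ∀ (g : DSpace n), innerD (eVec m) g = g m := by
    intro g
    rw [innerD, eVec, Finsupp.sum_single_index (by simp)]
    simp
  constructor
  · intro hne
    rw [heq', hinner]
    simp [eVec, Finsupp.single_apply, Ne.symm hne]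
  · rw [heq, hinner]
    have hv : ((c : ℂ) • eVec m) m = (c : ℂ) := by simp [eVec, Finsupp.single_apply]
    rw [hv, Complex.norm_real, Real.norm_eq_abs, abs_of_nonneg hc0]
    exact hcb
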